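/- Let F : ℝⁿ → ℝᵐ satisfy the local tangential cone condition with constant η ∈ [0, 1/2), and suppose x⋆ ∈ ℝⁿ satisfies F(x⋆) = 0. Let I ⊆ {1,…,m} be a nonempty index subset, let x_k ∈ ℝⁿ with (F'_I(x_k))ᵀ F_I(x_k) ≠ 0, let δ ∈ (0, 2(1−η)), and define x_{k+1} = x_k − δ (‖F_I(x_k)‖₂² / ‖(F'_I(x_k))ᵀ F_I(x_k)‖₂²) (F'_I(x_k))ᵀ F_I(x_k). Then ‖x_{k+1} − x⋆‖₂² ≤ ‖x_k − x⋆‖₂² − (2(1−η)δ − δ²) ‖F_I(x_k)‖₂² / σ_max²(F'_I(x_k)), where σ_max(A) denotes the largest singular value of A. -/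

import Mathlib

open Matrix

/-- The singular values of a real matrix `A`: square roots of the eigenvalues of `AᵀA`. -/
noncomputable def singVals {m' : Type*} [Fintype m'] {n : ℕ}
    (A : Matrix m' (Fin n) ℝ) : Fin n → ℝ :=
  fun j => Real.sqrt (((by have h := Matrix.isHermitian_conjTranspose_mul_self A; rwa [Matrix.conjTranspose_eq_transpose_of_trivial] at h : (Aᵀ * A).IsHermitian)).eigenvalues j)

/-- The largest singular value of `A`. -/
noncomputable def sigmaMax {m' : Type*} [Fintype m'] {n : ℕ}
    (A : Matrix m' (Fin n) ℝ) : ℝ :=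
  ⨆ j, singVals A j

lemma rayleigh {m' : Type*} [Fintype m'] {n : ℕ} (A : Matrix m' (Fin n) ℝ)
    (w : EuclideanSpace ℝ (Fin n)) :
    ∑ i, (A.mulVec w i) ^ 2 ≤ sigmaMax A ^ 2 * ‖w‖ ^ 2 := by
  rcases Nat.eq_zero_or_pos n with hn | hn
  · subst hn
    have h1 : ∀ i, A.mulVec w i = 0 := by
      intro i; simp [Matrix.mulVec, dotProduct]
    simp only [h1]
    have : (0:ℝ) ≤ sigmaMax A ^ 2 * ‖w‖ ^ 2 := by positivity
    simpa using this
  · haveI : NeZero n := ⟨by omega⟩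
    set M : Matrix (Fin n) (Fin n) ℝ := Aᴴ * A with hM
    have hherm : (Aᵀ * A).IsHermitian := by have h := Matrix.isHermitian_conjTranspose_mul_self A; rwa [Matrix.conjTranspose_eq_transpose_of_trivial] at h
    set b := hherm.eigenvectorBasis with hb
    set lam := hherm.eigenvalues with hlam
    -- step 1 : ∑ i, (A.mulVec w i)^2 = ⟪(M *ᵥ w), w⟫ as dot products
    have step1 : ∑ i, (A.mulVec w i) ^ 2 = (M *ᵥ (w : Fin n → ℝ)) ⬝ᵥ w := by
      have : (M *ᵥ (w : Fin n → ℝ)) = Aᴴ *ᵥ (A *ᵥ w) := by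
        rw [hM, ← Matrix.mulVec_mulVec]
      rw [this]
      simp only [Matrix.mulVec, dotProduct, Matrix.conjTranspose_apply, star_trivial]
      simp only [Finset.sum_mul]
      rw [Finset.sum_comm]
      refine Finset.sum_congr rfl fun i _ => ?_
      rw [pow_two, Finset.sum_mul]
      exact Finset.sum_congr rfl fun x _ => by ring
    have hip : ∀ (x y : EuclideanSpace ℝ (Fin n)), (inner ℝ x y : ℝ) = dotProduct (x : Fin n → ℝ) (y : Fin n → ℝ) := by
      intro x y
      simp [PiLp.inner_apply, RCLike.inner_apply, dotProduct, mul_comm]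
    have hsymm : Mᵀ = M := by
      calc Mᵀ = Mᴴ := by ext i j; simp [Matrix.conjTranspose_apply]
      _ = M := hherm
    have hvec : ∀ j : Fin n, (b j) ᵥ* M = lam j • (b j) := by
      intro j
      rw [← Matrix.mulVec_transpose, hsymm]
      exact hherm.mulVec_eigenvectorBasis j
    have expand : (M *ᵥ (w : Fin n → ℝ)) ⬝ᵥ w = ∑ j, lam j * ((inner ℝ (b j) w : ℝ)) ^ 2 := by
      have h0 := b.sum_inner_mul_inner
        (WithLp.toLp 2 (M *ᵥ (w : Fin n → ℝ))) w
      rw [hip] at h0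
      rw [← h0]
      refine Finset.sum_congr rfl fun j _ => ?_
      have h1 : (inner ℝ (WithLp.toLp 2 (M *ᵥ (w : Fin n → ℝ))) (b j) : ℝ)
          = lam j * (inner ℝ (b j) w : ℝ) := by
        rw [hip]
        rw [dotProduct_comm, Matrix.dotProduct_mulVec, hvec j,
          smul_dotProduct, ← hip]
        simp
      rw [h1]; ring
    have hnorm : ∑ j, ((inner ℝ (b j) w : ℝ)) ^ 2 = ‖w‖ ^ 2 := by
      have h0 := b.sum_inner_mul_inner w w
      rw [real_inner_self_eq_norm_sq] at h0
      rw [← h0]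
      refine Finset.sum_congr rfl fun j _ => ?_
      rw [pow_two, real_inner_comm]
    have hlam_le : ∀ j, lam j ≤ sigmaMax A ^ 2 := by
      intro j
      have h1 : singVals A j ≤ sigmaMax A := le_ciSup (Set.Finite.bddAbove (Set.finite_range _)) j
      have h2 : 0 ≤ lam j := Matrix.eigenvalues_conjTranspose_mul_self_nonneg A j
      have h3 : lam j = (singVals A j) ^ 2 := by
        rw [singVals, Real.sq_sqrt h2]
      rw [h3]
      exact pow_le_pow_left₀ (Real.sqrt_nonneg _) h1 2
    calc ∑ i, (A.mulVec w i) ^ 2 = ∑ j, lam j * ((inner ℝ (b j) w : ℝ)) ^ 2 := by rw [step1, expand]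
    _ ≤ ∑ j, sigmaMax A ^ 2 * ((inner ℝ (b j) w : ℝ)) ^ 2 := by
        refine Finset.sum_le_sum fun j _ => ?_
        exact mul_le_mul_of_nonneg_right (hlam_le j) (sq_nonneg _)
    _ = sigmaMax A ^ 2 * ‖w‖ ^ 2 := by rw [← Finset.mul_sum, hnorm]

lemma key_ineq (a t η : ℝ) (h : |a - t| ≤ η * |a|) : (1 - η) * a ^ 2 ≤ a * t := by
  obtain ⟨h1, h2⟩ := abs_le.mp h
  rcases le_or_gt 0 a with ha | ha
  · rw [abs_of_nonneg ha] at h1 h2; nlinarith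
  · rw [abs_of_neg ha] at h1 h2; nlinarith

/-- Lemma 4: one step of the averaging block nonlinear Kaczmarz method
with adaptive (extrapolated) stepsize, i.e.
`x_{k+1} = x_k − δ (‖F_I(x_k)‖₂²/‖(F'_I(x_k))ᵀ F_I(x_k)‖₂²) (F'_I(x_k))ᵀ F_I(x_k)`,
satisfies `‖x_{k+1} − x⋆‖₂² ≤ ‖x_k − x⋆‖₂² − (2(1−η)δ − δ²) ‖F_I(x_k)‖₂²/σ_max²(F'_I(x_k))`. -/
theorem abnk_adaptive_stepsize_step
    {n m : ℕ}
    (F : Fin m → EuclideanSpace ℝ (Fin n) → ℝ)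
    (grad : Fin m → EuclideanSpace ℝ (Fin n) → EuclideanSpace ℝ (Fin n))
    (η : ℝ) (hη0 : 0 ≤ η) (hη : η < 1 / 2)
    -- F is differentiable with Jacobian whose i-th row is ∇F_i
    (hdiff : ∀ i x, HasGradientAt (F i) (grad i x) x)
    -- local tangential cone condition with constant η
    (hltcc : ∀ i (x₁ x₂ : EuclideanSpace ℝ (Fin n)),
      |F i x₁ - F i x₂ - ∑ j, grad i x₁ j * (x₁ j - x₂ j)| ≤ η * |F i x₁ - F i x₂|)
    (xstar : EuclideanSpace ℝ (Fin n)) (hstar : ∀ i, F i xstar = 0)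
    (S : Finset (Fin m)) (hS : S.Nonempty)
    (xk : EuclideanSpace ℝ (Fin n))
    -- the row-submatrix F'_I(x_k) of the Jacobian
    (J : Matrix {i // i ∈ S} (Fin n) ℝ)
    (hJdef : J = Matrix.of fun (i : {i // i ∈ S}) (j : Fin n) => grad i.1 xk j)
    -- g = (F'_I(x_k))ᵀ F_I(x_k)
    (g : EuclideanSpace ℝ (Fin n))
    (hgdef : g = ∑ i ∈ S, F i xk • grad i xk)
    (hg : g ≠ 0)
    (δ : ℝ) (hδ0 : 0 < δ) (hδ2 : δ < 2 * (1 - η))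
    (xk1 : EuclideanSpace ℝ (Fin n))
    -- x_{k+1} = x_k − δ (‖F_I(x_k)‖₂² / ‖g‖₂²) g
    (hupd : xk1 = xk - (δ * (∑ i ∈ S, (F i xk) ^ 2) / ‖g‖ ^ 2) • g) :
    ‖xk1 - xstar‖ ^ 2
      ≤ ‖xk - xstar‖ ^ 2
        - (2 * (1 - η) * δ - δ ^ 2) * (∑ i ∈ S, (F i xk) ^ 2) / sigmaMax J ^ 2 := by
  classical
  set r : ℝ := ∑ i ∈ S, (F i xk) ^ 2 with hrdef
  have hr0 : 0 ≤ r := Finset.sum_nonneg fun i _ => sq_nonneg _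
  have hrpos : 0 < r := by
    rcases hr0.lt_or_eq with h | h
    · exact h
    · exfalso; apply hg
      have hz : ∀ i ∈ S, F i xk = 0 := by
        intro i hi
        have h0 := (Finset.sum_eq_zero_iff_of_nonneg
          (fun i _ => sq_nonneg (F i xk))).mp h.symm i hi
        exact pow_eq_zero_iff two_ne_zero |>.mp h0
      rw [hgdef]
      exact Finset.sum_eq_zero fun i hi => by rw [hz i hi, zero_smul]
  have hgn : 0 < ‖g‖ := norm_pos_iff.mpr hg
  have hgn2 : 0 < ‖g‖ ^ 2 := by positivity
  have hip : ∀ (x y : EuclideanSpace ℝ (Fin n)),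
      (inner ℝ x y : ℝ) = ∑ j, x j * y j := by
    intro x y
    simp [PiLp.inner_apply, RCLike.inner_apply, mul_comm]
  -- inner product lower bound
  have hinner : (1 - η) * r ≤ (inner ℝ g (xk - xstar) : ℝ) := by
    rw [hgdef, sum_inner]
    have hterm : ∀ i ∈ S,
        (1 - η) * (F i xk) ^ 2 ≤ (inner ℝ (F i xk • grad i xk) (xk - xstar) : ℝ) := by
      intro i hi
      rw [real_inner_smul_left]
      have hL := hltcc i xk xstar
      rw [hstar i, sub_zero] at hL
      have ht : (inner ℝ (grad i xk) (xk - xstar) : ℝ)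
          = ∑ j, grad i xk j * (xk j - xstar j) := by
        rw [hip]
        exact Finset.sum_congr rfl fun j _ => by rw [PiLp.sub_apply]
      rw [ht]
      exact key_ineq _ _ _ hL
    calc (1 - η) * r = ∑ i ∈ S, (1 - η) * (F i xk) ^ 2 := by rw [hrdef, Finset.mul_sum]
    _ ≤ _ := Finset.sum_le_sum hterm
  set c : ℝ := δ * r / ‖g‖ ^ 2 with hcdef
  have hc0 : 0 ≤ c := by positivity
  have hexp : ‖xk1 - xstar‖ ^ 2
      = ‖xk - xstar‖ ^ 2 - 2 * c * (inner ℝ g (xk - xstar) : ℝ) + c ^ 2 * ‖g‖ ^ 2 := by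
    rw [hupd]
    have h0 : xk - c • g - xstar = (xk - xstar) - c • g := by
      rw [sub_right_comm]
    rw [h0, norm_sub_sq_real, real_inner_smul_right, real_inner_comm, norm_smul]
    simp only [Real.norm_eq_abs, mul_pow, sq_abs]
    ring
  -- g as rows
  have hgj : ∀ j, g j = ∑ i ∈ S, F i xk * grad i xk j := by
    have hgen : ∀ (s : Finset (Fin m)) (j : Fin n),
        (∑ i ∈ s, F i xk • grad i xk) j = ∑ i ∈ s, F i xk * grad i xk j := by
      intro s j
      induction s using Finset.induction_on with
      | empty => rfl
      | insert a s h ih =>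
        rw [Finset.sum_insert h, Finset.sum_insert h, ← ih]
        rfl
    intro j; rw [hgdef]; exact hgen S j
  have hnormg : ‖g‖ ^ 2 = ∑ j, g j * g j := by
    rw [← real_inner_self_eq_norm_sq, hip]
  -- ‖g‖² = ⟨F_vec, J g⟩
  have h1 : ‖g‖ ^ 2 = ∑ i : {i // i ∈ S}, F i.1 xk * (J.mulVec g i) := by
    rw [hnormg]
    have hjj : ∀ j, g j * g j = ∑ i : {i // i ∈ S}, F i.1 xk * (J i j * g j) := by
      intro j
      nth_rewrite 1 [hgj j]
      rw [Finset.sum_mul, ← Finset.sum_coe_sort S (fun i => F i xk * grad i xk j * g j)]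
      refine Finset.sum_congr rfl fun i _ => ?_
      rw [hJdef]
      simp [Matrix.of_apply]
      ring
    calc ∑ j, g j * g j = ∑ j, ∑ i : {i // i ∈ S}, F i.1 xk * (J i j * g j) := by
          exact Finset.sum_congr rfl fun j _ => hjj j
    _ = ∑ i : {i // i ∈ S}, ∑ j, F i.1 xk * (J i j * g j) := Finset.sum_comm
    _ = ∑ i : {i // i ∈ S}, F i.1 xk * (J.mulVec g i) := by
          refine Finset.sum_congr rfl fun i _ => ?_
          rw [Matrix.mulVec, dotProduct, Finset.mul_sum]
  have hray := rayleigh J g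
  have hr_sub : r = ∑ i : {i // i ∈ S}, (F i.1 xk) ^ 2 := by
    rw [hrdef, ← Finset.sum_coe_sort S (fun i => (F i xk) ^ 2)]
  have hcs : (‖g‖ ^ 2) ^ 2 ≤ r * ∑ i : {i // i ∈ S}, (J.mulVec g i) ^ 2 := by
    rw [h1, hr_sub]
    exact Finset.sum_mul_sq_le_sq_mul_sq Finset.univ _ _
  have hσ : ‖g‖ ^ 2 ≤ sigmaMax J ^ 2 * r := by
    have hA : (‖g‖ ^ 2) ^ 2 ≤ (r * sigmaMax J ^ 2) * ‖g‖ ^ 2 := by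
      calc (‖g‖ ^ 2) ^ 2 ≤ r * ∑ i : {i // i ∈ S}, (J.mulVec g i) ^ 2 := hcs
      _ ≤ r * (sigmaMax J ^ 2 * ‖g‖ ^ 2) := mul_le_mul_of_nonneg_left hray hr0
      _ = (r * sigmaMax J ^ 2) * ‖g‖ ^ 2 := by ring
    have hB : ‖g‖ ^ 2 * ‖g‖ ^ 2 ≤ (r * sigmaMax J ^ 2) * ‖g‖ ^ 2 := by
      calc ‖g‖ ^ 2 * ‖g‖ ^ 2 = (‖g‖ ^ 2) ^ 2 := by ring
      _ ≤ _ := hA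
    have hC := le_of_mul_le_mul_right hB hgn2
    linarith [hC]
  have hs2 : 0 < sigmaMax J ^ 2 := by
    by_contra h
    push_neg at h
    have h0 : sigmaMax J ^ 2 * r ≤ 0 := mul_nonpos_iff.mpr (Or.inr ⟨h, hr0⟩)
    linarith
  have hβ : 0 < 2 * (1 - η) * δ - δ ^ 2 := by
    have h := mul_pos hδ0 (show (0:ℝ) < 2 * (1 - η) - δ by linarith)
    calc (0:ℝ) < δ * (2 * (1 - η) - δ) := h
    _ = 2 * (1 - η) * δ - δ ^ 2 := by ring
  have step : ‖xk1 - xstar‖ ^ 2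
      ≤ ‖xk - xstar‖ ^ 2 - (2 * (1 - η) * δ - δ ^ 2) * r ^ 2 / ‖g‖ ^ 2 := by
    rw [hexp]
    have h2 : c ^ 2 * ‖g‖ ^ 2 = δ ^ 2 * r ^ 2 / ‖g‖ ^ 2 := by
      rw [hcdef]; field_simp
    have h3 : 2 * c * ((1 - η) * r) = 2 * (1 - η) * δ * r ^ 2 / ‖g‖ ^ 2 := by
      rw [hcdef]; field_simp
    have h4 : 2 * c * ((1 - η) * r) ≤ 2 * c * (inner ℝ g (xk - xstar) : ℝ) :=
      mul_le_mul_of_nonneg_left hinner (by positivity)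
    have h5 : (2 * (1 - η) * δ - δ ^ 2) * r ^ 2 / ‖g‖ ^ 2
        = 2 * (1 - η) * δ * r ^ 2 / ‖g‖ ^ 2 - δ ^ 2 * r ^ 2 / ‖g‖ ^ 2 := by ring
    linarith
  have last : (2 * (1 - η) * δ - δ ^ 2) * r / sigmaMax J ^ 2
      ≤ (2 * (1 - η) * δ - δ ^ 2) * r ^ 2 / ‖g‖ ^ 2 := by
    rw [div_le_div_iff₀ hs2 hgn2]
    have h6 : ((2 * (1 - η) * δ - δ ^ 2) * r) * ‖g‖ ^ 2
        ≤ ((2 * (1 - η) * δ - δ ^ 2) * r) * (sigmaMax J ^ 2 * r) :=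
      mul_le_mul_of_nonneg_left hσ (by positivity)
    calc (2 * (1 - η) * δ - δ ^ 2) * r * ‖g‖ ^ 2
        ≤ ((2 * (1 - η) * δ - δ ^ 2) * r) * (sigmaMax J ^ 2 * r) := h6
    _ = (2 * (1 - η) * δ - δ ^ 2) * r ^ 2 * sigmaMax J ^ 2 := by ring
  linarith
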